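/- Let u, v, w be three distinct nonzero real numbers and n ≥ 1. For any proper 3-coloring of the cycle-plus-triangles graph G on 3n vertices using colors u, v, w, the product Φ(x_1,...,x_{3n}) · ∏_{i=1}^{3n} φ(x_i) equals ±1, where Φ(x_1,...,x_{3n}) = ∏_{i=1}^{3n}(1 - x_{i+1}/x_i) ∏_{i=1}^n (1 - a_i/b_i)(1 - b_i/c_i)(1 - c_i/a_i), x_i is the color of vertex i, and φ(u) = vw/((u-v)(u-w)) etc. -/

import Mathlib

noncomputable def mfun (u v w z : ℝ) : ℝ :=
  if z = u then (v-w)^2 else if z = v then (u-w)^2 else (u-v)^2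

lemma mfun_ne (u v w : ℝ) (huv : u ≠ v) (huw : u ≠ w) (hvw : v ≠ w) (z : ℝ) :
    mfun u v w z ≠ 0 := by
  unfold mfun
  split_ifs <;> exact pow_ne_zero _ (sub_ne_zero.mpr (by assumption))

lemma mfun_u (u v w : ℝ) : mfun u v w u = (v-w)^2 := if_pos rfl
lemma mfun_v (u v w : ℝ) (huv : u ≠ v) : mfun u v w v = (u-w)^2 := by
  unfold mfun; rw [if_neg (Ne.symm huv), if_pos rfl]
lemma mfun_w (u v w : ℝ) (huw : u ≠ w) (hvw : v ≠ w) : mfun u v w w = (u-v)^2 := by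
  unfold mfun; rw [if_neg (Ne.symm huw), if_neg (Ne.symm hvw)]

/-- edge lemma -/
lemma aux_edge (u v w : ℝ) (hu : u ≠ 0) (hv : v ≠ 0) (hw : w ≠ 0)
    (huv : u ≠ v) (huw : u ≠ w) (hvw : v ≠ w)
    (a b : ℝ) (ha : a = u ∨ a = v ∨ a = w) (hb : b = u ∨ b = v ∨ b = w) (hab : a ≠ b) :
    (1 - b / a)^2 = ((u-v)*(u-w)*(v-w))^2 / (a^2 * mfun u v w a * mfun u v w b) := by
  rcases ha with rfl | rfl | rfl <;> rcases hb with rfl | rfl | rfl <;>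
    first
    | exact absurd rfl hab
    | (simp only [mfun_u, mfun_v _ _ _ huv, mfun_w _ _ _ huw hvw]
       have h1 := sub_ne_zero.mpr huv
       have h2 := sub_ne_zero.mpr huw
       have h3 := sub_ne_zero.mpr hvw
       field_simp <;>
       ring)

/-- φ lemma -/
lemma aux_phi (u v w : ℝ) (hu : u ≠ 0) (hv : v ≠ 0) (hw : w ≠ 0)
    (huv : u ≠ v) (huw : u ≠ w) (hvw : v ≠ w)
    (a : ℝ) (ha : a = u ∨ a = v ∨ a = w) :
    (if a = u then v * w / ((u - v) * (u - w))
        else if a = v then u * w / ((v - u) * (v - w))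
        else u * v / ((w - u) * (w - v)))^2
      = (u*v*w)^2 * mfun u v w a / (a^2 * ((u-v)*(u-w)*(v-w))^2) := by
  have h1 := sub_ne_zero.mpr huv
  have h2 := sub_ne_zero.mpr huw
  have h3 := sub_ne_zero.mpr hvw
  have h1' := sub_ne_zero.mpr (Ne.symm huv)
  have h2' := sub_ne_zero.mpr (Ne.symm huw)
  have h3' := sub_ne_zero.mpr (Ne.symm hvw)
  rcases ha with rfl | rfl | rfl <;>
    simp only [if_pos rfl, if_true, if_neg (Ne.symm huv), if_neg (Ne.symm huw), if_neg (Ne.symm hvw),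
      mfun_u, mfun_v _ _ _ huv, mfun_w _ _ _ huw hvw] <;>
    (field_simp <;> ring)

/-- triangle lemma -/
lemma aux_tri (u v w : ℝ) (hu : u ≠ 0) (hv : v ≠ 0) (hw : w ≠ 0)
    (huv : u ≠ v) (huw : u ≠ w) (hvw : v ≠ w)
    (a b c : ℝ) (ha : a = u ∨ a = v ∨ a = w) (hb : b = u ∨ b = v ∨ b = w)
    (hc : c = u ∨ c = v ∨ c = w) (hab : a ≠ b) (hbc : b ≠ c) (hca : c ≠ a) :
    ((1 - a/b) * (1 - b/c) * (1 - c/a))^2 = ((u-v)*(u-w)*(v-w))^2 / (u*v*w)^2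
    ∧ mfun u v w a * mfun u v w b * mfun u v w c = ((u-v)*(u-w)*(v-w))^2
    ∧ a^2 * b^2 * c^2 = (u*v*w)^2 := by
  have h1 := sub_ne_zero.mpr huv
  have h2 := sub_ne_zero.mpr huw
  have h3 := sub_ne_zero.mpr hvw
  rcases ha with rfl | rfl | rfl <;> rcases hb with rfl | rfl | rfl <;>
    rcases hc with rfl | rfl | rfl <;>
    first
    | exact absurd rfl hab
    | exact absurd rfl hbc
    | exact absurd rfl hca
    | (refine ⟨?_, ?_, ?_⟩ <;>
        (try simp only [mfun_u, mfun_v _ _ _ huv, mfun_w _ _ _ huw hvw]) <;>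
        first
        | (field_simp; ring)
        | ring)

/-- for any proper 3-coloring of the cycle-plus-triangles graph
with three distinct nonzero real colors `u, v, w`, the product
`Φ(x_1,…,x_{3n}) · ∏ φ(x_i)` equals `±1`, where `x_i` is the color of vertex
`i`, `Φ = ∏ (1 - x_{i+1}/x_i) ∏ (1 - a_i/b_i)(1 - b_i/c_i)(1 - c_i/a_i)` and
`φ(u) = vw/((u-v)(u-w))` etc. -/
theorem stmt_18 (n : ℕ) (hn : 1 ≤ n) (t : Fin n × Fin 3 ≃ Fin (3 * n))
    (u v w : ℝ) (hu : u ≠ 0) (hv : v ≠ 0) (hw : w ≠ 0)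
    (huv : u ≠ v) (huw : u ≠ w) (hvw : v ≠ w) :
    haveI : NeZero (3 * n) := ⟨by omega⟩
    ∀ x : Fin (3 * n) → ℝ, (∀ i, x i ∈ ({u, v, w} : Set ℝ)) →
      (∀ i : Fin (3 * n), x i ≠ x (i + 1)) →
      (∀ i : Fin n, x (t (i, 0)) ≠ x (t (i, 1)) ∧ x (t (i, 1)) ≠ x (t (i, 2)) ∧
        x (t (i, 2)) ≠ x (t (i, 0))) →
      let φ : ℝ → ℝ := fun z =>
        if z = u then v * w / ((u - v) * (u - w))
        else if z = v then u * w / ((v - u) * (v - w))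
        else u * v / ((w - u) * (w - v))
      let Φ : ℝ :=
        (∏ i : Fin (3 * n), (1 - x (i + 1) / x i)) *
          ∏ i : Fin n,
            ((1 - x (t (i, 0)) / x (t (i, 1))) * (1 - x (t (i, 1)) / x (t (i, 2))) *
              (1 - x (t (i, 2)) / x (t (i, 0))))
      Φ * ∏ i : Fin (3 * n), φ (x i) = 1 ∨ Φ * ∏ i : Fin (3 * n), φ (x i) = -1 := by
  haveI : NeZero (3 * n) := ⟨by omega⟩
  intro x hmem hcyc htri φ Φ
  have hmem' : ∀ i, x i = u ∨ x i = v ∨ x i = w := fun i => hmem i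
  set S : ℝ := ((u-v)*(u-w)*(v-w))^2 with hSdef
  set K : ℝ := (u*v*w)^2 with hKdef
  set M : ℝ → ℝ := mfun u v w with hMdef
  have hS : S ≠ 0 := pow_ne_zero _ (by
    simp only [mul_ne_zero_iff]
    exact ⟨⟨sub_ne_zero.mpr huv, sub_ne_zero.mpr huw⟩, sub_ne_zero.mpr hvw⟩)
  have hK : K ≠ 0 := pow_ne_zero _ (by simp [hu, hv, hw])
  -- triangle facts
  have htriS : ∀ i : Fin n,
      ((1 - x (t (i,0)) / x (t (i,1))) * (1 - x (t (i,1)) / x (t (i,2))) *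
        (1 - x (t (i,2)) / x (t (i,0))))^2 = S / K
      ∧ M (x (t (i,0))) * M (x (t (i,1))) * M (x (t (i,2))) = S
      ∧ (x (t (i,0)))^2 * (x (t (i,1)))^2 * (x (t (i,2)))^2 = K := fun i =>
    aux_tri u v w hu hv hw huv huw hvw _ _ _ (hmem' _) (hmem' _) (hmem' _)
      (htri i).1 (htri i).2.1 (htri i).2.2
  -- global products via the triangle partition
  have hPm : ∏ i : Fin (3*n), M (x i) = S ^ n := by
    calc ∏ i : Fin (3*n), M (x i)
        = ∏ p : Fin n × Fin 3, M (x (t p)) := (Equiv.prod_comp t fun j => M (x j)).symm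
      _ = ∏ i : Fin n, (M (x (t (i,0))) * M (x (t (i,1))) * M (x (t (i,2)))) := by
          rw [Fintype.prod_prod_type]
          exact Finset.prod_congr rfl fun i _ => Fin.prod_univ_three _
      _ = ∏ _i : Fin n, S := Finset.prod_congr rfl fun i _ => (htriS i).2.1
      _ = S ^ n := by simp
  have hQ : ∏ i : Fin (3*n), (x i)^2 = K ^ n := by
    calc ∏ i : Fin (3*n), (x i)^2
        = ∏ p : Fin n × Fin 3, (x (t p))^2 := (Equiv.prod_comp t fun j => (x j)^2).symm
      _ = ∏ i : Fin n, ((x (t (i,0)))^2 * (x (t (i,1)))^2 * (x (t (i,2)))^2) := by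
          rw [Fintype.prod_prod_type]
          exact Finset.prod_congr rfl fun i _ => Fin.prod_univ_three _
      _ = ∏ _i : Fin n, K := Finset.prod_congr rfl fun i _ => (htriS i).2.2
      _ = K ^ n := by simp
  have hshift : ∏ i : Fin (3*n), M (x (i+1)) = ∏ i : Fin (3*n), M (x i) :=
    Equiv.prod_comp (Equiv.addRight 1) (fun j => M (x j))
  -- cycle product
  have hA : (∏ i : Fin (3*n), (1 - x (i+1) / x i))^2 = S^(3*n) / (K^n * (S^n * S^n)) := by
    calc (∏ i : Fin (3*n), (1 - x (i+1) / x i))^2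
        = ∏ i : Fin (3*n), (1 - x (i+1) / x i)^2 := (Finset.prod_pow _ _ _).symm
      _ = ∏ i : Fin (3*n), S / ((x i)^2 * M (x i) * M (x (i+1))) :=
          Finset.prod_congr rfl fun i _ =>
            aux_edge u v w hu hv hw huv huw hvw _ _ (hmem' i) (hmem' (i+1)) (hcyc i)
      _ = (∏ _i : Fin (3*n), S) / ∏ i : Fin (3*n), ((x i)^2 * M (x i) * M (x (i+1))) :=
          Finset.prod_div_distrib _ _
      _ = S^(3*n) / (K^n * (S^n * S^n)) := by
          rw [Finset.prod_const, Finset.card_univ, Fintype.card_fin,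
            Finset.prod_mul_distrib, Finset.prod_mul_distrib, hshift, hPm, hQ, mul_assoc]
  -- triangle product
  have hB : (∏ i : Fin n,
      ((1 - x (t (i,0)) / x (t (i,1))) * (1 - x (t (i,1)) / x (t (i,2))) *
        (1 - x (t (i,2)) / x (t (i,0)))))^2 = (S / K)^n := by
    rw [← Finset.prod_pow]
    calc ∏ i : Fin n, ((1 - x (t (i,0)) / x (t (i,1))) * (1 - x (t (i,1)) / x (t (i,2))) *
          (1 - x (t (i,2)) / x (t (i,0))))^2
        = ∏ _i : Fin n, (S / K) := Finset.prod_congr rfl fun i _ => (htriS i).1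
      _ = (S / K)^n := by simp [div_pow]
  -- φ product
  have hP : (∏ i : Fin (3*n), φ (x i))^2 = (K^(3*n) * S^n) / (K^n * S^(3*n)) := by
    calc (∏ i : Fin (3*n), φ (x i))^2
        = ∏ i : Fin (3*n), (φ (x i))^2 := (Finset.prod_pow _ _ _).symm
      _ = ∏ i : Fin (3*n), K * M (x i) / ((x i)^2 * S) :=
          Finset.prod_congr rfl fun i _ =>
            aux_phi u v w hu hv hw huv huw hvw _ (hmem' i)
      _ = (∏ i : Fin (3*n), K * M (x i)) / ∏ i : Fin (3*n), ((x i)^2 * S) :=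
          Finset.prod_div_distrib _ _
      _ = (K^(3*n) * S^n) / (K^n * S^(3*n)) := by
          rw [Finset.prod_mul_distrib, Finset.prod_mul_distrib, Finset.prod_const,
            Finset.prod_const, Finset.card_univ, Fintype.card_fin, hPm, hQ]
  rw [← mul_self_eq_one_iff]
  have hX : (Φ * ∏ i : Fin (3*n), φ (x i)) * (Φ * ∏ i : Fin (3*n), φ (x i))
      = ((∏ i : Fin (3*n), (1 - x (i+1) / x i))^2)
        * ((∏ i : Fin n,
            ((1 - x (t (i,0)) / x (t (i,1))) * (1 - x (t (i,1)) / x (t (i,2))) *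
              (1 - x (t (i,2)) / x (t (i,0)))))^2)
        * ((∏ i : Fin (3*n), φ (x i))^2) := by
    simp only [Φ]; ring
  rw [hX, hA, hB, hP, div_pow]
  field_simp
  ring
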